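/- arXiv:2411.19364 — 3 statements merged into one kernel-verified Lean document; each statement's English description precedes it below -/
import Mathlib

section
/- For every integer m ≥ 0, one has m + 19 ≤ ‖2^m · 10^5‖₂ ≤ m + 20. -/
/-- `CanRepr l n m` means `n` can be expressed using exactly `m` copies of `l`
    combined with addition and multiplication (and parentheses). -/
inductive CanRepr (l : ℕ) : ℕ → ℕ → Prop
  | base : CanRepr l l 1
  | add {a b p q : ℕ} : CanRepr l a p → CanRepr l b q → CanRepr l (a + b) (p + q)
  | mul {a b p q : ℕ} : CanRepr l a p → CanRepr l b q → CanRepr l (a * b) (p + q)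

/-- The `l`-complexity `‖n‖_l`: the minimal number of `l`'s needed to express `n`
    using only addition and multiplication. (By convention `sInf ∅ = 0`.) -/
noncomputable def complexity (l n : ℕ) : ℕ := sInf {m | CanRepr l n m}

/-! ### Auxiliary development -/

/-- Derivations of odd numbers: `LDer d m` means the odd number `d` can be
"built" with cost `m`, where building allows products and the step
`d ↦ 2^j * d + 1`. -/
inductive LDer : ℕ → ℕ → Prop
  | one : LDer 1 0
  | mul {d₁ d₂ m₁ m₂ : ℕ} : LDer d₁ m₁ → LDer d₂ m₂ → LDer (d₁ * d₂) (m₁ + m₂)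
  | rule {d m : ℕ} (j : ℕ) (hj : 1 ≤ j) (h : LDer d m) : LDer (2 ^ j * d + 1) (m + j + 1)

lemma lder_odd {d m : ℕ} (h : LDer d m) : Odd d := by
  induction h with
  | one => exact odd_one
  | mul _ _ ih1 ih2 => exact ih1.mul ih2
  | rule j hj h ih =>
      exact Even.add_one ((Nat.even_pow.mpr ⟨even_two, by omega⟩).mul_right _)

lemma exp_lb {c x e : ℕ} (h : c ≤ 2 ^ x) (h2 : 2 ^ e < c) : e < x := by
  by_contra hx
  push_neg at hx
  have := Nat.pow_le_pow_right (by norm_num : 1 ≤ 2) hx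
  omega

lemma lder_le {d m : ℕ} (h : LDer d m) : d ≤ 2 ^ m := by
  induction h with
  | one => simp
  | mul h1 h2 ih1 ih2 =>
      rw [pow_add]; exact Nat.mul_le_mul ih1 ih2
  | rule j hj h ih =>
      rename_i d' m'
      have h1 : 2 ^ j * d' ≤ 2 ^ j * 2 ^ m' := Nat.mul_le_mul_left _ ih
      have h2 : 0 < 2 ^ j * 2 ^ m' := by positivity
      have e : 2 ^ (m' + j + 1) = 2 ^ j * 2 ^ m' * 2 := by ring
      omega

/-- `4 d ≤ 3 · 2^m` for nontrivial `d`. -/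
lemma lder_lb3 {d m : ℕ} (h : LDer d m) : 3 ≤ d → 4 * d ≤ 3 * 2 ^ m := by
  induction h with
  | one => omega
  | mul h1 h2 ih1 ih2 =>
      rename_i d₁ d₂ m₁ m₂
      intro hd
      have ho1 := lder_odd h1
      have ho2 := lder_odd h2
      rcases ho1 with ⟨t, rfl⟩
      rcases Nat.eq_zero_or_pos t with rfl | ht
      · -- d₁ = 1
        simp only [Nat.mul_zero, Nat.zero_add, one_mul] at *
        have := ih2 (by omega)
        have hpow : 3 * 2 ^ m₂ ≤ 3 * 2 ^ (m₁ + m₂) :=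
          Nat.mul_le_mul_left _ (Nat.pow_le_pow_right (by norm_num) (by omega))
        omega
      · have h1' : 4 * (2 * t + 1) ≤ 3 * 2 ^ m₁ := ih1 (by omega)
        have h2' : d₂ ≤ 2 ^ m₂ := lder_le h2
        calc 4 * ((2 * t + 1) * d₂) = (4 * (2 * t + 1)) * d₂ := by ring
          _ ≤ (3 * 2 ^ m₁) * 2 ^ m₂ := Nat.mul_le_mul h1' h2'
          _ = 3 * 2 ^ (m₁ + m₂) := by rw [pow_add]; ring
  | rule j hj h ih =>
      rename_i d' m'
      intro _
      have hd : d' ≤ 2 ^ m' := lder_le h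
      have h1 : 2 ^ j * d' ≤ 2 ^ j * 2 ^ m' := Nat.mul_le_mul_left _ hd
      have h2 : 0 < 2 ^ j * 2 ^ m' := by positivity
      have e : 3 * 2 ^ (m' + j + 1) = 6 * (2 ^ j * 2 ^ m') := by ring
      omega

/-- `8 (d+1) ≤ 5 · 2^m` for `d ≥ 7`. -/
lemma lder_lb7 {d m : ℕ} (h : LDer d m) : 7 ≤ d → 8 * (d + 1) ≤ 5 * 2 ^ m := by
  induction h with
  | one => omega
  | mul h1 h2 ih1 ih2 =>
      rename_i d₁ d₂ m₁ m₂
      intro hd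
      have ho1 := lder_odd h1
      have ho2 := lder_odd h2
      have hd1 : d₁ = 1 ∨ 3 ≤ d₁ := by rcases ho1 with ⟨t, rfl⟩; omega
      have hd2 : d₂ = 1 ∨ 3 ≤ d₂ := by rcases ho2 with ⟨t, rfl⟩; omega
      rcases hd1 with rfl | hd1
      · simp only [one_mul] at hd ⊢
        have := ih2 hd
        have hpow : 5 * 2 ^ m₂ ≤ 5 * 2 ^ (m₁ + m₂) :=
          Nat.mul_le_mul_left _ (Nat.pow_le_pow_right (by norm_num) (by omega))
        omega
      rcases hd2 with rfl | hd2
      · rw [mul_one] at hd ⊢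
        have := ih1 hd
        have hpow : 5 * 2 ^ m₁ ≤ 5 * 2 ^ (m₁ + m₂) :=
          Nat.mul_le_mul_left _ (Nat.pow_le_pow_right (by norm_num) (by omega))
        omega
      · have h1' := lder_lb3 h1 hd1
        have h2' := lder_lb3 h2 hd2
        have h9 : 9 ≤ d₁ * d₂ := by
          calc 9 = 3 * 3 := rfl
            _ ≤ d₁ * d₂ := Nat.mul_le_mul hd1 hd2
        have h16 : 16 * (d₁ * d₂) ≤ 9 * (2 ^ m₁ * 2 ^ m₂) := by
          calc 16 * (d₁ * d₂) = (4 * d₁) * (4 * d₂) := by ring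
            _ ≤ (3 * 2 ^ m₁) * (3 * 2 ^ m₂) := Nat.mul_le_mul h1' h2'
            _ = 9 * (2 ^ m₁ * 2 ^ m₂) := by ring
        have e : 5 * 2 ^ (m₁ + m₂) = 5 * (2 ^ m₁ * 2 ^ m₂) := by rw [pow_add]
        omega
  | rule j hj h ih =>
      rename_i d' m'
      intro _
      have hd : d' ≤ 2 ^ m' := lder_le h
      have hdpos : 1 ≤ d' := (lder_odd h).pos
      have h1 : 2 ^ j * d' ≤ 2 ^ j * 2 ^ m' := Nat.mul_le_mul_left _ hd
      have hjd : 2 ≤ 2 ^ j := by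
        calc (2:ℕ) = 2 ^ 1 := rfl
          _ ≤ 2 ^ j := Nat.pow_le_pow_right (by norm_num) hj
      have h6 : 2 ≤ 2 ^ j * d' := by
        calc (2:ℕ) = 2 * 1 := rfl
          _ ≤ 2 ^ j * d' := Nat.mul_le_mul hjd hdpos
      -- `2^j * 2^m'` is a power of two; either everything is tiny or it is ≥ 8
      have hpow8 : 2 ^ j * d' ≤ 5 ∨ 8 ≤ 2 ^ j * 2 ^ m' := by
        by_cases hc : 3 ≤ j + m'
        · right
          have h8 : (8 : ℕ) = 2 ^ 3 := rfl
          rw [h8, ← pow_add]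
          exact Nat.pow_le_pow_right (by norm_num) hc
        · left
          push_neg at hc
          have hle : 2 ^ j * 2 ^ m' ≤ 4 := by
            rw [← pow_add]
            calc (2:ℕ) ^ (j + m') ≤ 2 ^ 2 := Nat.pow_le_pow_right (by norm_num) (by omega)
              _ = 4 := rfl
          omega
      have e : 5 * 2 ^ (m' + j + 1) = 10 * (2 ^ j * 2 ^ m') := by ring
      omega

lemma cancel_pow {t d e : ℕ} (hd : Odd d) (h : d = 2 ^ t * e) : t = 0 := by
  by_contra ht
  have heven : Even (2 ^ t * e) := (Nat.even_pow.mpr ⟨even_two, ht⟩).mul_right e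
  rw [← h] at heven
  exact (Nat.not_even_iff_odd.mpr hd) heven

lemma pow_odd_unique {k l d e : ℕ} (hd : Odd d) (he : Odd e)
    (h : 2 ^ k * d = 2 ^ l * e) : k = l ∧ d = e := by
  rcases le_total k l with hkl | hlk
  · have h2 : 2 ^ k * d = 2 ^ k * (2 ^ (l - k) * e) := by
      rw [h, ← mul_assoc, ← pow_add]
      congr 2
      omega
    have hde : d = 2 ^ (l - k) * e := Nat.eq_of_mul_eq_mul_left (by positivity) h2
    have h0 : l - k = 0 := cancel_pow hd hde
    have : k = l := by omega
    subst this
    refine ⟨rfl, ?_⟩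
    simpa [h0] using hde
  · have h2 : 2 ^ l * e = 2 ^ l * (2 ^ (k - l) * d) := by
      rw [← h, ← mul_assoc, ← pow_add]
      congr 2
      omega
    have hed : e = 2 ^ (k - l) * d := Nat.eq_of_mul_eq_mul_left (by positivity) h2
    have h0 : k - l = 0 := cancel_pow he hed
    have : k = l := by omega
    subst this
    refine ⟨rfl, ?_⟩
    have := hed
    simp [h0] at this
    omega

/-- The crucial lower bounds at `625` and `3125`. -/
lemma lder_lb5 {d m : ℕ} (h : LDer d m) :
    (d = 625 → 11 ≤ m) ∧ (d = 3125 → 14 ≤ m) := by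
  induction h with
  | one => exact ⟨by omega, by omega⟩
  | mul h1 h2 ih1 ih2 =>
      rename_i d₁ d₂ m₁ m₂
      constructor
      · intro hEq
        have hdvd : d₁ ∣ 5 ^ 4 := ⟨d₂, by omega⟩
        obtain ⟨i, hi, rfl⟩ := (Nat.dvd_prime_pow (by norm_num : Nat.Prime 5)).mp hdvd
        interval_cases i
        · -- d₁ = 1, d₂ = 625
          norm_num at hEq
          have := ih2.1 (by omega)
          omega
        · -- d₁ = 5, d₂ = 125
          norm_num at hEq
          have hd2 : d₂ = 125 := by omega
          subst hd2
          have hm1 : 7 ≤ 2 ^ m₁ := by have := lder_lb3 h1 (by norm_num); omega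
          have hm2 : 167 ≤ 2 ^ m₂ := by have := lder_lb3 h2 (by norm_num); omega
          have e1 := exp_lb hm1 (by norm_num : (2:ℕ) ^ 2 < 7)
          have e2 := exp_lb hm2 (by norm_num : (2:ℕ) ^ 7 < 167)
          omega
        · -- d₁ = 25, d₂ = 25
          norm_num at hEq
          have hd2 : d₂ = 25 := by omega
          subst hd2
          have hm1 : 34 ≤ 2 ^ m₁ := by have := lder_lb3 h1 (by norm_num); omega
          have hm2 : 34 ≤ 2 ^ m₂ := by have := lder_lb3 h2 (by norm_num); omega
          have e1 := exp_lb hm1 (by norm_num : (2:ℕ) ^ 5 < 34)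
          have e2 := exp_lb hm2 (by norm_num : (2:ℕ) ^ 5 < 34)
          omega
        · -- d₁ = 125, d₂ = 5
          norm_num at hEq
          have hd2 : d₂ = 5 := by omega
          subst hd2
          have hm1 : 167 ≤ 2 ^ m₁ := by have := lder_lb3 h1 (by norm_num); omega
          have hm2 : 7 ≤ 2 ^ m₂ := by have := lder_lb3 h2 (by norm_num); omega
          have e1 := exp_lb hm1 (by norm_num : (2:ℕ) ^ 7 < 167)
          have e2 := exp_lb hm2 (by norm_num : (2:ℕ) ^ 2 < 7)
          omega
        · -- d₁ = 625, d₂ = 1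
          norm_num at hEq
          have := ih1.1 (by norm_num)
          omega
      · intro hEq
        have hdvd : d₁ ∣ 5 ^ 5 := ⟨d₂, by omega⟩
        obtain ⟨i, hi, rfl⟩ := (Nat.dvd_prime_pow (by norm_num : Nat.Prime 5)).mp hdvd
        interval_cases i
        · norm_num at hEq
          have := ih2.2 (by omega)
          omega
        · -- 5 * 625
          norm_num at hEq
          have hd2 : d₂ = 625 := by omega
          subst hd2
          have hm1 : 7 ≤ 2 ^ m₁ := by have := lder_lb3 h1 (by norm_num); omega
          have e1 := exp_lb hm1 (by norm_num : (2:ℕ) ^ 2 < 7)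
          have := ih2.1 rfl
          omega
        · -- 25 * 125
          norm_num at hEq
          have hd2 : d₂ = 125 := by omega
          subst hd2
          have hm1 : 34 ≤ 2 ^ m₁ := by have := lder_lb3 h1 (by norm_num); omega
          have hm2 : 167 ≤ 2 ^ m₂ := by have := lder_lb3 h2 (by norm_num); omega
          have e1 := exp_lb hm1 (by norm_num : (2:ℕ) ^ 5 < 34)
          have e2 := exp_lb hm2 (by norm_num : (2:ℕ) ^ 7 < 167)
          omega
        · -- 125 * 25
          norm_num at hEq
          have hd2 : d₂ = 25 := by omega
          subst hd2
          have hm1 : 167 ≤ 2 ^ m₁ := by have := lder_lb3 h1 (by norm_num); omega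
          have hm2 : 34 ≤ 2 ^ m₂ := by have := lder_lb3 h2 (by norm_num); omega
          have e1 := exp_lb hm1 (by norm_num : (2:ℕ) ^ 7 < 167)
          have e2 := exp_lb hm2 (by norm_num : (2:ℕ) ^ 5 < 34)
          omega
        · -- 625 * 5
          norm_num at hEq
          have hd2 : d₂ = 5 := by omega
          subst hd2
          have hm2 : 7 ≤ 2 ^ m₂ := by have := lder_lb3 h2 (by norm_num); omega
          have e2 := exp_lb hm2 (by norm_num : (2:ℕ) ^ 2 < 7)
          have := ih1.1 (by norm_num)
          omega
        · -- 3125 * 1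
          norm_num at hEq
          have := ih1.2 (by norm_num)
          omega
  | rule j hj h ih =>
      rename_i d0 m0
      constructor
      · intro hEq
        have h624 : 2 ^ j * d0 = 2 ^ 4 * 39 := by norm_num at hEq ⊢; omega
        obtain ⟨hj4, hd39⟩ := pow_odd_unique (lder_odd h) (by decide) h624
        subst hd39
        have hm : 52 ≤ 2 ^ m0 := by have := lder_lb3 h (by norm_num); omega
        have := exp_lb hm (by norm_num : (2:ℕ) ^ 5 < 52)
        omega
      · intro hEq
        have h3124 : 2 ^ j * d0 = 2 ^ 2 * 781 := by norm_num at hEq ⊢; omega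
        obtain ⟨hj2, hd⟩ := pow_odd_unique (lder_odd h) (by decide) h3124
        subst hd
        have hm : 1042 ≤ 2 ^ m0 := by have := lder_lb3 h (by norm_num); omega
        have := exp_lb hm (by norm_num : (2:ℕ) ^ 10 < 1042)
        omega

/-- The invariant carried through `CanRepr` derivations. -/
def Good (n p : ℕ) : Prop :=
  16 * n ≤ 5 * 2 ^ p ∨ ∃ d k m, Odd d ∧ LDer d m ∧ n = 2 ^ k * d ∧ k + m ≤ p

lemma good_le {n p : ℕ} (h : Good n p) : n ≤ 2 ^ p := by
  rcases h with h | ⟨d, k, m, hd, hld, rfl, hkm⟩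
  · omega
  · calc 2 ^ k * d ≤ 2 ^ k * 2 ^ m := Nat.mul_le_mul_left _ (lder_le hld)
      _ = 2 ^ (k + m) := (pow_add 2 k m).symm
      _ ≤ 2 ^ p := Nat.pow_le_pow_right (by norm_num) hkm

lemma ld3 : LDer 3 2 := by
  have := LDer.rule 1 le_rfl LDer.one
  norm_num at this
  exact this

lemma ld5 : LDer 5 3 := by
  have := LDer.rule 2 (by norm_num) LDer.one
  norm_num at this
  exact this

lemma ld7 : LDer 7 4 := by
  have := LDer.rule 1 le_rfl ld3
  norm_num at this
  exact this

lemma ld9 : LDer 9 4 := by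
  have := LDer.rule 3 (by norm_num) LDer.one
  norm_num at this
  exact this

/-- The addition step. -/
lemma add_good {a b pa pb : ℕ} (ha2 : 2 ≤ a) (hb2 : 2 ≤ b) (hae : Even a) (hbe : Even b)
    (hA : Good a pa) (hB : Good b pb) (hba : b ≤ a) : Good (a + b) (pa + pb) := by
  have haP : a ≤ 2 ^ pa := good_le hA
  have hbP : b ≤ 2 ^ pb := good_le hB
  have hpaw : 1 ≤ pa := by
    have := exp_lb haP (show (2:ℕ)^0 < a by simpa using (show 1 < a from ha2))
    omega
  have hpbw : 1 ≤ pb := by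
    have := exp_lb hbP (show (2:ℕ)^0 < b by simpa using (show 1 < b from hb2))
    omega
  have hpadd : 2 ^ pa * 2 ^ pb = 2 ^ (pa + pb) := (pow_add 2 pa pb).symm
  by_cases hb8 : 8 ≤ b
  · -- both sides at least 8: huge slack
    left
    obtain ⟨a', rfl⟩ : ∃ a', a = a' + 8 := ⟨a - 8, by omega⟩
    obtain ⟨b', rfl⟩ : ∃ b', b = b' + 8 := ⟨b - 8, by omega⟩
    have hab : 4 * ((a' + 8) + (b' + 8)) ≤ (a' + 8) * (b' + 8) := by nlinarith [Nat.zero_le (a' * b')]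
    have hP : (a' + 8) * (b' + 8) ≤ 2 ^ pa * 2 ^ pb := Nat.mul_le_mul haP hbP
    omega
  · have hbsmall : b = 2 ∨ b = 4 ∨ b = 6 := by
      rcases hbe with ⟨t, rfl⟩; omega
    rcases hbsmall with rfl | rfl | rfl
    · -- b = 2
      rcases hA with hcap | ⟨d, k, m', hd, hld, rfl, hkm⟩
      · left
        have hb2' : 2 ≤ 2 ^ pb := hbP
        have h2 : (16 * a) * 2 ≤ 5 * 2 ^ (pa + pb) := by
          calc (16 * a) * 2 ≤ (5 * 2 ^ pa) * 2 ^ pb := Nat.mul_le_mul hcap hb2'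
            _ = 5 * 2 ^ (pa + pb) := by rw [pow_add]; ring
        omega
      · -- a = 2^k * d
        rcases Nat.lt_or_ge k 2 with hk2 | hk2
        · -- k = 0 impossible (evenness), so k = 1
          have hk1 : k = 1 := by
            rcases Nat.eq_zero_or_pos k with rfl | _
            · exfalso
              simp only [pow_zero, one_mul] at hae
              rw [Nat.even_iff] at hae
              rcases hd with ⟨t, rfl⟩
              omega
            · omega
          subst hk1
          have hd1 : d = 1 ∨ d = 3 ∨ d = 5 ∨ 7 ≤ d := by
            rcases hd with ⟨t, rfl⟩; omega
          rcases hd1 with rfl | rfl | rfl | hd7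
          · -- a = 2 : n = 4
            right
            exact ⟨1, 2, 0, odd_one, LDer.one, by norm_num, by omega⟩
          · -- a = 6 : n = 8
            right
            have hm2 : 2 ≤ m' := by
              have h1 := lder_lb3 hld (by norm_num)
              have h4 : 4 ≤ 2 ^ m' := by omega
              have := exp_lb h4 (by norm_num : (2:ℕ)^1 < 4)
              omega
            exact ⟨1, 3, 0, odd_one, LDer.one, by norm_num, by omega⟩
          · -- a = 10 : n = 12
            right
            have hm3 : 3 ≤ m' := by
              have h1 := lder_lb3 hld (by norm_num)
              have h7 : 7 ≤ 2 ^ m' := by omega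
              have := exp_lb h7 (by norm_num : (2:ℕ)^2 < 7)
              omega
            exact ⟨3, 2, 2, by decide, ld3, by norm_num, by omega⟩
          · -- a = 2d, d ≥ 7 : capped
            left
            have h7 := lder_lb7 hld hd7
            have hpow : 2 ^ (m' + 2) ≤ 2 ^ (pa + pb) :=
              Nat.pow_le_pow_right (by norm_num) (by omega)
            have e : 2 ^ (m' + 2) = 4 * 2 ^ m' := by ring
            have goal : 16 * (2 ^ 1 * d + 2) = 4 * (8 * (d + 1)) := by ring
            omega
        · -- k ≥ 2
          right
          obtain ⟨k2, rfl⟩ : ∃ k2, k = k2 + 2 := ⟨k - 2, by omega⟩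
          have hld' := LDer.rule (k2 + 1) (by omega) hld
          refine ⟨2 ^ (k2 + 1) * d + 1, 1, m' + (k2 + 1) + 1, lder_odd hld', hld', by ring, by omega⟩
    · -- b = 4
      have hpb2 : 2 ≤ pb := by
        have := exp_lb hbP (by norm_num : (2:ℕ)^1 < 4)
        omega
      by_cases ha16 : 16 ≤ a
      · left
        have h2 : a * 4 ≤ 2 ^ pa * 2 ^ pb := Nat.mul_le_mul haP hbP
        omega
      · have hasmall : a = 4 ∨ a = 6 ∨ a = 8 ∨ a = 10 ∨ a = 12 ∨ a = 14 := by
          rcases hae with ⟨t, rfl⟩; omega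
        rcases hasmall with rfl | rfl | rfl | rfl | rfl | rfl
        · -- 4+4 = 8
          right
          have hpa2 : 2 ≤ pa := by
            have := exp_lb haP (by norm_num : (2:ℕ)^1 < 4)
            omega
          exact ⟨1, 3, 0, odd_one, LDer.one, by norm_num, by omega⟩
        · -- 6+4 = 10
          right
          have hpa3 : 3 ≤ pa := by
            have := exp_lb haP (by norm_num : (2:ℕ)^2 < 6)
            omega
          exact ⟨5, 1, 3, by decide, ld5, by norm_num, by omega⟩
        · -- 8+4 = 12
          right
          have hpa3 : 3 ≤ pa := by
            have := exp_lb haP (by norm_num : (2:ℕ)^2 < 8)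
            omega
          exact ⟨3, 2, 2, by decide, ld3, by norm_num, by omega⟩
        · -- 10+4 = 14
          right
          have hpa4 : 4 ≤ pa := by
            have := exp_lb haP (by norm_num : (2:ℕ)^3 < 10)
            omega
          exact ⟨7, 1, 4, by decide, ld7, by norm_num, by omega⟩
        · -- 12+4 = 16
          right
          have hpa4 : 4 ≤ pa := by
            have := exp_lb haP (by norm_num : (2:ℕ)^3 < 12)
            omega
          exact ⟨1, 4, 0, odd_one, LDer.one, by norm_num, by omega⟩
        · -- 14+4 = 18
          right
          have hpa4 : 4 ≤ pa := by
            have := exp_lb haP (by norm_num : (2:ℕ)^3 < 14)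
            omega
          exact ⟨9, 1, 4, by decide, ld9, by norm_num, by omega⟩
    · -- b = 6
      left
      have hpb8 : 8 ≤ 2 ^ pb := by
        rcases hB with hcap | ⟨d, k, m', hd, hld, h6, hkm⟩
        · have h20 : 20 ≤ 2 ^ pb := by omega
          omega
        · have h6' : 2 ^ k * d = 2 ^ 1 * 3 := by rw [← h6]; norm_num
          obtain ⟨hk, hd3⟩ := pow_odd_unique hd (by decide) h6'
          subst hd3
          have hm2 : 2 ≤ m' := by
            have h1 := lder_lb3 hld (by norm_num)
            have h4 : 4 ≤ 2 ^ m' := by omega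
            have := exp_lb h4 (by norm_num : (2:ℕ)^1 < 4)
            omega
          calc (8:ℕ) = 2 ^ 3 := rfl
            _ ≤ 2 ^ pb := Nat.pow_le_pow_right (by norm_num) (by omega)
      have h2 : a * 8 ≤ 2 ^ pa * 2 ^ pb := Nat.mul_le_mul haP hpb8
      omega

/-- The main invariant. -/
lemma main_inv {n p : ℕ} (h : CanRepr 2 n p) : 2 ≤ n ∧ Even n ∧ Good n p := by
  induction h with
  | base =>
      exact ⟨le_rfl, even_two, Or.inr ⟨1, 1, 0, odd_one, LDer.one, by norm_num, by omega⟩⟩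
  | add h1 h2 ih1 ih2 =>
      rename_i a b p q
      obtain ⟨ha2, hae, hGa⟩ := ih1
      obtain ⟨hb2, hbe, hGb⟩ := ih2
      refine ⟨by omega, hae.add hbe, ?_⟩
      rcases le_total b a with hba | hab
      · exact add_good ha2 hb2 hae hbe hGa hGb hba
      · have := add_good hb2 ha2 hbe hae hGb hGa hab
        rwa [Nat.add_comm b a, Nat.add_comm q p] at this
  | mul h1 h2 ih1 ih2 =>
      rename_i a b p q
      obtain ⟨ha2, hae, hGa⟩ := ih1
      obtain ⟨hb2, hbe, hGb⟩ := ih2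
      have haP : a ≤ 2 ^ p := good_le hGa
      have hbP : b ≤ 2 ^ q := good_le hGb
      have hab4 : 4 ≤ a * b := by
        calc (4:ℕ) = 2 * 2 := rfl
          _ ≤ a * b := Nat.mul_le_mul ha2 hb2
      refine ⟨by omega, hae.mul_right _, ?_⟩
      have hpq : 2 ^ p * 2 ^ q = 2 ^ (p + q) := (pow_add 2 p q).symm
      rcases hGa with hcapa | ⟨d1, k1, m1, hd1, hld1, rfl, hkm1⟩
      · left
        calc 16 * (a * b) = (16 * a) * b := by ring
          _ ≤ (5 * 2 ^ p) * 2 ^ q := Nat.mul_le_mul hcapa hbP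
          _ = 5 * 2 ^ (p + q) := by rw [pow_add]; ring
      rcases hGb with hcapb | ⟨d2, k2, m2, hd2, hld2, rfl, hkm2⟩
      · left
        calc 16 * (2 ^ k1 * d1 * b) = (2 ^ k1 * d1) * (16 * b) := by ring
          _ ≤ 2 ^ p * (5 * 2 ^ q) := Nat.mul_le_mul haP hcapb
          _ = 5 * 2 ^ (p + q) := by rw [pow_add]; ring
      · right
        exact ⟨d1 * d2, k1 + k2, m1 + m2, hd1.mul hd2, LDer.mul hld1 hld2,
          by rw [pow_add]; ring, by omega⟩

/-- Upper bound construction. -/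
lemma canrepr_upper (m : ℕ) : CanRepr 2 (2 ^ m * 100000) (m + 20) := by
  have h4 : CanRepr 2 4 2 := by
    have := CanRepr.mul (CanRepr.base (l := 2)) CanRepr.base
    norm_num at this
    exact this
  have h8 : CanRepr 2 8 3 := by
    have := CanRepr.mul (CanRepr.base (l := 2)) h4
    norm_num at this
    exact this
  have h10 : CanRepr 2 10 4 := by
    have := CanRepr.add (CanRepr.base (l := 2)) h8
    norm_num at this
    exact this
  have h100 : CanRepr 2 100 8 := by
    have := CanRepr.mul h10 h10
    norm_num at this
    exact this
  have h10000 : CanRepr 2 10000 16 := by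
    have := CanRepr.mul h100 h100
    norm_num at this
    exact this
  have h100000 : CanRepr 2 100000 20 := by
    have := CanRepr.mul h10 h10000
    norm_num at this
    exact this
  induction m with
  | zero => simpa using h100000
  | succ m ih =>
      have := CanRepr.mul (CanRepr.base (l := 2)) ih
      have e1 : 2 * (2 ^ m * 100000) = 2 ^ (m + 1) * 100000 := by ring
      have e2 : 1 + (m + 20) = (m + 1) + 20 := by omega
      rw [e1, e2] at this
      exact this

theorem stmt_15 (m : ℕ) :
    m + 19 ≤ complexity 2 (2 ^ m * 10 ^ 5) ∧
      complexity 2 (2 ^ m * 10 ^ 5) ≤ m + 20 := by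
  have hten : (10:ℕ) ^ 5 = 100000 := by norm_num
  have hmem : (m + 20) ∈ {p | CanRepr 2 (2 ^ m * 10 ^ 5) p} := by
    rw [Set.mem_setOf_eq, hten]
    exact canrepr_upper m
  have hunfold : complexity 2 (2 ^ m * 10 ^ 5)
      = sInf {p | CanRepr 2 (2 ^ m * 10 ^ 5) p} := rfl
  have hlow : ∀ c, CanRepr 2 (2 ^ m * 10 ^ 5) c → m + 19 ≤ c := by
    intro c hc
    obtain ⟨_, _, hGood⟩ := main_inv hc
    rcases hGood with hcap | ⟨d, k, m', hd, hld, hEq, hkm⟩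
    · by_contra hcon
      push_neg at hcon
      have hcle : c ≤ m + 18 := by omega
      have h1 : (2:ℕ) ^ c ≤ 2 ^ (m + 18) := Nat.pow_le_pow_right (by norm_num) hcle
      have h2 : (2:ℕ) ^ (m + 18) = 2 ^ m * 262144 := by rw [pow_add]; norm_num
      have h3 : (16:ℕ) * (2 ^ m * 10 ^ 5) = 1600000 * 2 ^ m := by rw [hten]; ring
      have h4 : (1:ℕ) ≤ 2 ^ m := Nat.one_le_two_pow
      omega
    · have hsplit : (2:ℕ) ^ m * 10 ^ 5 = 2 ^ (m + 5) * 3125 := by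
        rw [hten, pow_add]; ring
      have hEq' : 2 ^ k * d = 2 ^ (m + 5) * 3125 := by rw [← hEq, hsplit]
      obtain ⟨hk, hd3125⟩ := pow_odd_unique hd (by decide) hEq'
      subst hd3125
      have h14 : 14 ≤ m' := (lder_lb5 hld).2 rfl
      omega
  constructor
  · rw [hunfold]
    have hne : {p | CanRepr 2 (2 ^ m * 10 ^ 5) p}.Nonempty := ⟨m + 20, hmem⟩
    have hc := Nat.sInf_mem hne
    rw [Set.mem_setOf_eq] at hc
    exact hlow _ hc
  · rw [hunfold]
    exact Nat.sInf_le hmem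
end

section
/- For integers m = m₁ > m₂ > m₃ ≥ 1, one has ‖2^{m₁} + 2^{m₂} + 2^{m₃}‖₂ = m + 2; that is, the upper bound ‖2^{m₁} + ⋯ + 2^{m_k}‖₂ ≤ m₁ + k − 1 is attained with equality when k = 3. -/
/-- `n` is a power of two. -/
def IsP1 (n : ℕ) : Prop := ∃ x, n = 2^x

/-- `n` is a sum of two distinct powers of two. -/
def IsP2 (n : ℕ) : Prop := ∃ x y, y < x ∧ n = 2^x + 2^y

lemma pow2_lt_iff {a b : ℕ} : (2:ℕ)^a < 2^b ↔ a < b :=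
  Nat.pow_lt_pow_iff_right (by norm_num)

lemma pow2_mono {a b : ℕ} (h : a ≤ b) : (2:ℕ)^a ≤ 2^b :=
  Nat.pow_le_pow_right (by norm_num) h

lemma pow2_pos (a : ℕ) : 0 < (2:ℕ)^a := pow_pos (by norm_num) a

lemma notP1_two_pow_add {x y : ℕ} (h : y < x) : ¬ IsP1 (2^x + 2^y) := by
  rintro ⟨z, hz⟩
  have h1 : (2:ℕ)^x < 2^z := by have := pow2_pos y; omega
  have h2 : (2:ℕ)^z < 2^(x+1) := by
    have hy : (2:ℕ)^y < 2^x := pow2_lt_iff.mpr h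
    have : (2:ℕ)^(x+1) = 2^x * 2 := pow_succ 2 x
    omega
  have := pow2_lt_iff.mp h1
  have := pow2_lt_iff.mp h2
  omega

lemma sum_iii (a b q r : ℕ) (ha2 : 2 ≤ a) (hae : a % 2 = 0) (ha : a ≤ 2^q)
    (hb2 : 2 ≤ b) (hb : b ≤ 2^r) (hq : 1 ≤ q) (hr : 1 ≤ r) (hrq : r ≤ q)
    (hP1 : ¬ IsP1 (a+b)) (hP2 : ¬ IsP2 (a+b)) : 2*(a+b) ≤ 2^(q+r) := by
  rcases Nat.lt_or_ge r 2 with hr2 | hr2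
  · -- r = 1, b = 2
    have hr1 : r = 1 := by omega
    subst hr1
    have hb' : b = 2 := by simpa using hb |>.antisymm hb2
    subst hb'
    rcases Nat.lt_or_ge a (2^q) with hlt | hge
    · -- a ≤ 2^q - 2
      have hq2 : (2:ℕ)^q % 2 = 0 := by
        obtain ⟨q', rfl⟩ : ∃ q', q = q' + 1 := ⟨q - 1, by omega⟩
        have : (2:ℕ)^(q'+1) = 2^q' * 2 := pow_succ 2 q'
        omega
      have : a + 2 ≤ 2^q := by omega
      have h2 : (2:ℕ)^(q+1) = 2^q * 2 := pow_succ 2 q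
      omega
    · -- a = 2^q
      have haq : a = 2^q := le_antisymm ha hge
      rcases Nat.lt_or_ge q 2 with hq1 | hq1
      · have : q = 1 := by omega
        subst this
        exact absurd ⟨2, by norm_num [haq]⟩ hP1
      · exact absurd ⟨q, 1, by omega, by rw [haq, pow_one]⟩ hP2
  · -- r ≥ 2, hence q ≥ 2
    have hA : (4:ℕ) ≤ 2^q := by calc (4:ℕ) = 2^2 := by norm_num
                                    _ ≤ 2^q := pow2_mono (by omega)
    have hB : (4:ℕ) ≤ 2^r := by calc (4:ℕ) = 2^2 := by norm_num
                                    _ ≤ 2^r := pow2_mono hr2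
    have hAB : (2:ℕ)^(q+r) = 2^q * 2^r := pow_add 2 q r
    have h1 : 4 * 2^q ≤ 2^q * 2^r := by
      calc 4 * 2^q = 2^q * 4 := by ring
        _ ≤ 2^q * 2^r := Nat.mul_le_mul_left _ hB
    have h2 : 4 * 2^r ≤ 2^q * 2^r := by
      calc 4 * 2^r = 4 * 2^r := rfl
        _ ≤ 2^q * 2^r := Nat.mul_le_mul_right _ hA
    omega

lemma sum_ii (a b q r : ℕ) (ha2 : 2 ≤ a) (hae : a % 2 = 0) (ha : a ≤ 2^q)
    (hb2 : 2 ≤ b) (hb : b ≤ 2^r) (hq : 1 ≤ q) (hr : 1 ≤ r) (hrq : r ≤ q)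
    (hP1 : ¬ IsP1 (a+b)) : 4*(a+b) ≤ 3 * 2^(q+r) := by
  rcases Nat.lt_or_ge r 2 with hr2 | hr2
  · have hr1 : r = 1 := by omega
    subst hr1
    have hb' : b = 2 := by simpa using hb |>.antisymm hb2
    subst hb'
    have h2 : (2:ℕ)^(q+1) = 2^q * 2 := pow_succ 2 q
    rcases Nat.lt_or_ge a (2^q) with hlt | hge
    · have hq2 : (2:ℕ)^q % 2 = 0 := by
        obtain ⟨q', rfl⟩ : ∃ q', q = q' + 1 := ⟨q - 1, by omega⟩
        have : (2:ℕ)^(q'+1) = 2^q' * 2 := pow_succ 2 q'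
        omega
      omega
    · have haq : a = 2^q := le_antisymm ha hge
      rcases Nat.lt_or_ge q 2 with hq1 | hq1
      · have : q = 1 := by omega
        subst this
        exact absurd ⟨2, by norm_num [haq]⟩ hP1
      · have hA : (4:ℕ) ≤ 2^q := by calc (4:ℕ) = 2^2 := by norm_num
                                        _ ≤ 2^q := pow2_mono hq1
        omega
  · have hA : (4:ℕ) ≤ 2^q := by calc (4:ℕ) = 2^2 := by norm_num
                                    _ ≤ 2^q := pow2_mono (by omega)
    have hB : (4:ℕ) ≤ 2^r := by calc (4:ℕ) = 2^2 := by norm_num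
                                    _ ≤ 2^r := pow2_mono hr2
    have hAB : (2:ℕ)^(q+r) = 2^q * 2^r := pow_add 2 q r
    have h1 : 4 * 2^q ≤ 2^q * 2^r := by
      calc 4 * 2^q = 2^q * 4 := by ring
        _ ≤ 2^q * 2^r := Nat.mul_le_mul_left _ hB
    have h2 : 4 * 2^r ≤ 2^q * 2^r := Nat.mul_le_mul_right _ hA
    omega

/-- If `a = 2^x + 2^y` can be done with `q` twos but `8a > 5·2^q`, then
`a = 3·2^y` and `q = y+2`. -/
lemma forced {x y q : ℕ} (hyx : y < x) (h4 : 4*(2^x+2^y) ≤ 3*2^q)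
    (h8 : 5*2^q < 8*(2^x+2^y)) : x = y + 1 ∧ q = y + 2 := by
  have e1 : (2:ℕ)^(x+2) = 2^x * 4 := by ring
  have e2 : (2:ℕ)^(q+2) = 2^q * 4 := by ring
  have e3 : (2:ℕ)^(x+4) = 2^x * 16 := by ring
  have e4 : (2:ℕ)^(y+3) = 2^y * 8 := by ring
  have hyx' : (2:ℕ)^y < 2^x := pow2_lt_iff.mpr hyx
  have hx1 : x < q := by
    have : (2:ℕ)^(x+2) < 2^(q+2) := by omega
    have := pow2_lt_iff.mp this; omega
  have hx2 : q < x + 2 := by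
    have : (2:ℕ)^(q+2) < 2^(x+4) := by omega
    have := pow2_lt_iff.mp this; omega
  have hxq : q = x + 1 := by omega
  subst hxq
  have e5 : (2:ℕ)^(x+1) = 2^x * 2 := pow_succ 2 x
  have hy : x + 1 < y + 3 := by
    have : (2:ℕ)^(x+1) < 2^(y+3) := by omega
    exact pow2_lt_iff.mp this
  omega

lemma key {n p : ℕ} (h : CanRepr 2 n p) :
    1 ≤ p ∧ 2 ≤ n ∧ n % 2 = 0 ∧ n ≤ 2^p ∧
    (¬ IsP1 n → 4*n ≤ 3*2^p) ∧ (¬ IsP1 n → ¬ IsP2 n → 2*n ≤ 2^p) := by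
  induction h with
  | base =>
    refine ⟨le_refl _, le_refl _, rfl, by norm_num, ?_, ?_⟩
    · intro h; exact absurd ⟨1, (pow_one 2).symm⟩ h
    · intro h _; exact absurd ⟨1, (pow_one 2).symm⟩ h
  | @add a b q r ha hb iha ihb =>
    obtain ⟨hq1, ha2, hae, haq, _, _⟩ := iha
    obtain ⟨hr1, hb2, hbe, hbr, _, _⟩ := ihb
    have hA : (2:ℕ) ≤ 2^q := by calc (2:ℕ) = 2^1 := by norm_num
                                    _ ≤ 2^q := pow2_mono hq1
    have hB : (2:ℕ) ≤ 2^r := by calc (2:ℕ) = 2^1 := by norm_num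
                                    _ ≤ 2^r := pow2_mono hr1
    have hAB : (2:ℕ)^(q+r) = 2^q * 2^r := pow_add 2 q r
    have h1 : 2 * 2^q ≤ 2^q * 2^r := by
      calc 2 * 2^q = 2^q * 2 := by ring
        _ ≤ 2^q * 2^r := Nat.mul_le_mul_left _ hB
    have h2 : 2 * 2^r ≤ 2^q * 2^r := Nat.mul_le_mul_right _ hA
    refine ⟨by omega, by omega, by omega, by omega, ?_, ?_⟩
    · intro hP1
      rcases Nat.le_total r q with hrq | hqr
      · exact sum_ii a b q r ha2 hae haq hb2 hbr hq1 hr1 hrq hP1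
      · have := sum_ii b a r q hb2 hbe hbr ha2 haq hr1 hq1 hqr
          (by rwa [Nat.add_comm b a])
        rw [Nat.add_comm b a, Nat.add_comm r q] at this
        exact this
    · intro hP1 hP2
      rcases Nat.le_total r q with hrq | hqr
      · exact sum_iii a b q r ha2 hae haq hb2 hbr hq1 hr1 hrq hP1 hP2
      · have := sum_iii b a r q hb2 hbe hbr ha2 haq hr1 hq1 hqr
          (by rwa [Nat.add_comm b a]) (by rwa [Nat.add_comm b a])
        rw [Nat.add_comm b a, Nat.add_comm r q] at this
        exact this
  | @mul a b q r ha hb iha ihb =>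
    obtain ⟨hq1, ha2, hae, haq, haii, haiii⟩ := iha
    obtain ⟨hr1, hb2, hbe, hbr, hbii, hbiii⟩ := ihb
    have hAB : (2:ℕ)^(q+r) = 2^q * 2^r := pow_add 2 q r
    have hev : (a*b) % 2 = 0 := by
      obtain ⟨k, rfl⟩ : ∃ k, a = 2*k := ⟨a/2, by omega⟩
      rw [Nat.mul_assoc]; exact Nat.mul_mod_right 2 _
    have h2ab : 2 ≤ a * b := le_trans ha2 (Nat.le_mul_of_pos_right a (by omega))
    have hub : a * b ≤ 2^(q+r) := by rw [hAB]; exact Nat.mul_le_mul haq hbr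
    refine ⟨by omega, h2ab, hev, hub, ?_, ?_⟩
    · -- clause (ii)
      intro hP1
      by_cases hp1a : IsP1 a
      · have hp1b : ¬ IsP1 b := by
          rintro ⟨u, rfl⟩; obtain ⟨x, rfl⟩ := hp1a
          exact hP1 ⟨x + u, (pow_add 2 x u).symm⟩
        calc 4*(a*b) = a * (4*b) := by ring
          _ ≤ 2^q * (3*2^r) := Nat.mul_le_mul haq (hbii hp1b)
          _ = 3 * 2^(q+r) := by rw [hAB]; ring
      · calc 4*(a*b) = (4*a) * b := by ring
          _ ≤ (3*2^q) * 2^r := Nat.mul_le_mul (haii hp1a) hbr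
          _ = 3 * 2^(q+r) := by rw [hAB]; ring
    · -- clause (iii)
      intro hP1 hP2
      by_cases hca : IsP1 a ∨ IsP2 a
      · by_cases hcb : IsP1 b ∨ IsP2 b
        · -- both structured; derive contradictions or the 3·2^y case
          rcases hca with ⟨x, rfl⟩ | ⟨x, y, hyx, rfl⟩
          · rcases hcb with ⟨u, rfl⟩ | ⟨u, v, hvu, rfl⟩
            · exact absurd ⟨x + u, (pow_add 2 x u).symm⟩ hP1
            · exact absurd ⟨x + u, x + v, by omega, by
                rw [Nat.mul_add, ← pow_add, ← pow_add]⟩ hP2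
          · rcases hcb with ⟨u, rfl⟩ | ⟨u, v, hvu, rfl⟩
            · exact absurd ⟨x + u, y + u, by omega, by
                rw [Nat.add_mul, ← pow_add, ← pow_add]⟩ hP2
            · -- P2 × P2
              have hna : ¬ IsP1 (2^x + 2^y) := notP1_two_pow_add hyx
              have hnb : ¬ IsP1 (2^u + 2^v) := notP1_two_pow_add hvu
              have h4a := haii hna
              have h4b := hbii hnb
              by_cases h8a : 8*(2^x+2^y) ≤ 5*2^q
              · have : 32*((2^x+2^y)*(2^u+2^v)) ≤ 15*(2^q*2^r) := by
                  calc 32*((2^x+2^y)*(2^u+2^v)) = (8*(2^x+2^y))*(4*(2^u+2^v)) := by ring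
                    _ ≤ (5*2^q)*(3*2^r) := Nat.mul_le_mul h8a h4b
                    _ = 15*(2^q*2^r) := by ring
                have := Nat.mul_le_mul_right (2^q*2^r) (show (15:ℕ) ≤ 16 by norm_num)
                rw [hAB]; omega
              · by_cases h8b : 8*(2^u+2^v) ≤ 5*2^r
                · have : 32*((2^x+2^y)*(2^u+2^v)) ≤ 15*(2^q*2^r) := by
                    calc 32*((2^x+2^y)*(2^u+2^v)) = (4*(2^x+2^y))*(8*(2^u+2^v)) := by ring
                      _ ≤ (3*2^q)*(5*2^r) := Nat.mul_le_mul h4a h8b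
                      _ = 15*(2^q*2^r) := by ring
                  rw [hAB]; omega
                · obtain ⟨hx, hq⟩ := forced hyx h4a (by omega)
                  obtain ⟨hu, hr⟩ := forced hvu h4b (by omega)
                  subst hx; subst hu
                  exact absurd ⟨y + v + 3, y + v, by omega, by ring⟩ hP2
        · push_neg at hcb
          have := hbiii hcb.1 hcb.2
          calc 2*(a*b) = a * (2*b) := by ring
            _ ≤ 2^q * 2^r := Nat.mul_le_mul haq this
            _ = 2^(q+r) := hAB.symm
      · push_neg at hca
        have := haiii hca.1 hca.2
        calc 2*(a*b) = (2*a) * b := by ring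
          _ ≤ 2^q * 2^r := Nat.mul_le_mul this hbr
          _ = 2^(q+r) := hAB.symm

-- Upper bound constructions
lemma canrepr_two_pow {k : ℕ} (hk : 1 ≤ k) : CanRepr 2 (2^k) k := by
  induction k, hk using Nat.le_induction with
  | base => simpa using CanRepr.base
  | succ k hk ih =>
    have h := CanRepr.mul CanRepr.base ih
    rw [show 2 * 2^k = 2^(k+1) by ring] at h
    rw [show 1 + k = k + 1 by omega] at h
    exact h

lemma canrepr_two_terms (c d : ℕ) (hc : 1 ≤ c) (hd : 1 ≤ d) :
    CanRepr 2 (2^(c+d) + 2^c) (c+d+1) := by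
  induction c, hc using Nat.le_induction with
  | base =>
    have h := CanRepr.add (canrepr_two_pow (k := 1 + d) (by omega)) CanRepr.base
    rw [show (2:ℕ) = 2^1 by norm_num] at h
    exact h
  | succ c hc ih =>
    have h := CanRepr.mul CanRepr.base ih
    rw [show 2 * (2^(c+d) + 2^c) = 2^(c+1+d) + 2^(c+1) by ring] at h
    rw [show 1 + (c+d+1) = c+1+d+1 by omega] at h
    exact h

lemma canrepr_three_terms (c e f : ℕ) (hc : 1 ≤ c) (he : 1 ≤ e) (hf : 1 ≤ f) :
    CanRepr 2 (2^(c+e+f) + 2^(c+e) + 2^c) (c+e+f+2) := by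
  induction c, hc using Nat.le_induction with
  | base =>
    have h := CanRepr.add (canrepr_two_terms (1+e) f (by omega) hf) CanRepr.base
    rw [show (2:ℕ) = 2^1 by norm_num] at h
    rw [show 1+e+f+1+1 = 1+e+f+2 by omega] at h
    exact h
  | succ c hc ih =>
    have h := CanRepr.mul CanRepr.base ih
    rw [show 2 * (2^(c+e+f) + 2^(c+e) + 2^c) = 2^(c+1+e+f) + 2^(c+1+e) + 2^(c+1) by ring] at h
    rw [show 1 + (c+e+f+2) = c+1+e+f+2 by omega] at h
    exact h

lemma three_not_P1 {m₁ m₂ m₃ : ℕ} (h12 : m₂ < m₁) (h23 : m₃ < m₂) :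
    ¬ IsP1 (2^m₁ + 2^m₂ + 2^m₃) := by
  rintro ⟨x, hx⟩
  have h1 : (2:ℕ)^m₁ < 2^x := by have := pow2_pos m₂; have := pow2_pos m₃; omega
  have h3 : (2:ℕ)^(m₁+1) ≤ 2^x := pow2_mono (pow2_lt_iff.mp h1)
  have e1 : (2:ℕ)^(m₁+1) = 2^m₁ * 2 := pow_succ 2 m₁
  have e2 : (2:ℕ)^(m₂+1) = 2^m₂ * 2 := pow_succ 2 m₂
  have h4 : (2:ℕ)^(m₂+1) ≤ 2^m₁ := pow2_mono (by omega)
  have h5 : (2:ℕ)^m₃ < 2^m₂ := pow2_lt_iff.mpr h23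
  omega

lemma three_not_P2 {m₁ m₂ m₃ : ℕ} (h12 : m₂ < m₁) (h23 : m₃ < m₂) :
    ¬ IsP2 (2^m₁ + 2^m₂ + 2^m₃) := by
  rintro ⟨x, y, hyx, hx⟩
  have e1 : (2:ℕ)^(m₁+1) = 2^m₁ * 2 := pow_succ 2 m₁
  have e2 : (2:ℕ)^(m₂+1) = 2^m₂ * 2 := pow_succ 2 m₂
  have h4 : (2:ℕ)^(m₂+1) ≤ 2^m₁ := pow2_mono (by omega)
  have h5 : (2:ℕ)^m₃ < 2^m₂ := pow2_lt_iff.mpr h23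
  have hyx' : (2:ℕ)^y < 2^x := pow2_lt_iff.mpr hyx
  -- n < 2^(m₁+1) and n > 2^m₁, n ≥ 2^x, n < 2^(x+1)
  have ex : (2:ℕ)^(x+1) = 2^x * 2 := pow_succ 2 x
  have hm : (2:ℕ)^m₂ + 2^m₃ < 2^m₁ := by omega
  have hxle : x ≤ m₁ := by
    have hp := pow2_pos y
    have : (2:ℕ)^x < 2^(m₁+1) := by omega
    have := pow2_lt_iff.mp this; omega
  have hxge : m₁ ≤ x := by
    have : (2:ℕ)^m₁ < 2^(x+1) := by
      have := pow2_pos m₂; have := pow2_pos m₃; omega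
    have := pow2_lt_iff.mp this; omega
  have hxm : x = m₁ := by omega
  subst hxm
  have hy : (2:ℕ)^y = 2^m₂ + 2^m₃ := by omega
  have ey : (2:ℕ)^(y+1) = 2^y * 2 := pow_succ 2 y
  have h6 : (2:ℕ)^m₂ < 2^y := by have := pow2_pos m₃; omega
  have h7 : (2:ℕ)^y < 2^(m₂+1) := by omega
  have := pow2_lt_iff.mp h6
  have := pow2_lt_iff.mp h7
  omega

theorem stmt_17 (m₁ m₂ m₃ : ℕ) (h12 : m₂ < m₁) (h23 : m₃ < m₂) (h3 : 1 ≤ m₃) :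
    complexity 2 (2 ^ m₁ + 2 ^ m₂ + 2 ^ m₃) = m₁ + 2 := by
  have hmem : CanRepr 2 (2 ^ m₁ + 2 ^ m₂ + 2 ^ m₃) (m₁ + 2) := by
    have h := canrepr_three_terms m₃ (m₂ - m₃) (m₁ - m₂) h3 (by omega) (by omega)
    rw [show m₃ + (m₂ - m₃) + (m₁ - m₂) = m₁ by omega,
        show m₃ + (m₂ - m₃) = m₂ by omega] at h
    exact h
  have hlb : ∀ k ∈ {m | CanRepr 2 (2 ^ m₁ + 2 ^ m₂ + 2 ^ m₃) m}, m₁ + 2 ≤ k := by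
    intro k hk
    obtain ⟨_, _, _, _, _, hiii⟩ := key hk
    have h2n := hiii (three_not_P1 h12 h23) (three_not_P2 h12 h23)
    have h1 : (2:ℕ)^(m₁+1) < 2^k := by
      have e1 : (2:ℕ)^(m₁+1) = 2^m₁ * 2 := pow_succ 2 m₁
      have := pow2_pos m₂; have := pow2_pos m₃
      omega
    have := pow2_lt_iff.mp h1
    omega
  exact le_antisymm (Nat.sInf_le hmem) (le_csInf ⟨m₁ + 2, hmem⟩ hlb)
end

section
/- Let n be a positive even integer. Then ⌈log₂ n⌉ ≤ ‖n‖₂ ≤ 2·log₂(n) − 1, where log₂ denotes the real base-2 logarithm. -/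
lemma canRepr_pos_le {n m : ℕ} (h : CanRepr 2 n m) : 1 ≤ m ∧ n ≤ 2 ^ m := by
  induction h with
  | base => simp
  | add h1 h2 ih1 ih2 =>
    obtain ⟨hp, ha⟩ := ih1; obtain ⟨hq, hb⟩ := ih2
    refine ⟨by omega, ?_⟩
    calc _ ≤ 2 ^ _ + 2 ^ _ := Nat.add_le_add ha hb
    _ ≤ 2 ^ _ * 2 ^ _ := by
        rcases Nat.exists_eq_add_of_le hp with ⟨p', rfl⟩
        rcases Nat.exists_eq_add_of_le hq with ⟨q', rfl⟩
        have h1 : (1:ℕ) ≤ 2 ^ p' := Nat.one_le_two_pow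
        have h2 : (1:ℕ) ≤ 2 ^ q' := Nat.one_le_two_pow
        simp [pow_add, pow_succ]
        nlinarith
    _ = 2 ^ _ := (pow_add 2 _ _).symm
  | mul h1 h2 ih1 ih2 =>
    obtain ⟨hp, ha⟩ := ih1; obtain ⟨hq, hb⟩ := ih2
    exact ⟨by omega, by rw [pow_add]; exact Nat.mul_le_mul ha hb⟩

lemma exists_repr (n : ℕ) (hn : 0 < n) (he : 2 ∣ n) :
    ∃ m, CanRepr 2 n m ∧ m + 1 ≤ 2 * Nat.log 2 n ∧ (4 ∣ n → m + 2 ≤ 2 * Nat.log 2 n) := by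
  induction n using Nat.strong_induction_on with
  | _ n ih =>
  rcases eq_or_lt_of_le (by omega : 2 ≤ n) with h2 | h4
  · refine ⟨1, by rw [← h2]; exact CanRepr.base, ?_, ?_⟩
    · rw [← h2]
      have : 1 ≤ Nat.log 2 2 := Nat.le_log_of_pow_le (by norm_num) (by norm_num)
      omega
    · intro h; omega
  · -- n ≥ 4 (even, so n ≥ 4)
    have hn4 : 4 ≤ n := by omega
    have hlog1 : 1 ≤ Nat.log 2 n := Nat.le_log_of_pow_le (by norm_num) (by omega)
    by_cases h4d : 4 ∣ n
    · -- n = 2 * (n/2), n/2 even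
      obtain ⟨k, rfl⟩ := h4d
      have hk : 0 < k := by omega
      have h2k : 2 ∣ 2 * k := ⟨k, rfl⟩
      obtain ⟨m, hm, hm1, _⟩ := ih (2 * k) (by omega) (by omega) ⟨k, rfl⟩
      refine ⟨1 + m, ?_, ?_, fun _ => ?_⟩
      · have : (4 : ℕ) * k = 2 * (2 * k) := by ring
        rw [this]; exact CanRepr.mul CanRepr.base hm
      all_goals {
        have hl : Nat.log 2 (4 * k) = Nat.log 2 (2 * k) + 1 := by
          have := Nat.log_div_base 2 (4 * k)
          have hdiv : 4 * k / 2 = 2 * k := by omega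
          rw [hdiv] at this
          have hlog1' : 1 ≤ Nat.log 2 (4 * k) :=
            Nat.le_log_of_pow_le (by norm_num) (by omega)
          omega
        omega }
    · -- n ≡ 2 mod 4, n ≥ 6; n - 2 divisible by 4
      have h6 : 6 ≤ n := by omega
      have h4d' : 4 ∣ n - 2 := by omega
      obtain ⟨m, hm, _, hm2⟩ := ih (n - 2) (by omega) (by omega) (by omega)
      refine ⟨m + 1, ?_, ?_, fun h => absurd h h4d⟩
      · have : n = (n - 2) + 2 := by omega
        rw [this]; exact CanRepr.add hm CanRepr.base
      · have := hm2 h4d'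
        have : Nat.log 2 (n - 2) ≤ Nat.log 2 n := Nat.log_mono_right (by omega)
        omega

theorem stmt_18 (n : ℕ) (hn : 0 < n) (heven : 2 ∣ n) :
    ⌈Real.logb 2 n⌉ ≤ (complexity 2 n : ℤ) ∧
      (complexity 2 n : ℝ) ≤ 2 * Real.logb 2 n - 1 := by
  obtain ⟨m, hm, hm1, _⟩ := exists_repr n hn heven
  have hne : {m | CanRepr 2 n m}.Nonempty := ⟨m, hm⟩
  have hmem : CanRepr 2 n (complexity 2 n) := Nat.sInf_mem hne
  obtain ⟨hc1, hc2⟩ := canRepr_pos_le hmem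
  have hle : complexity 2 n ≤ m := Nat.sInf_le hm
  constructor
  · -- lower bound
    have : Real.logb 2 n ≤ complexity 2 n := by
      have h1 : (n : ℝ) ≤ 2 ^ (complexity 2 n) := by exact_mod_cast hc2
      calc Real.logb 2 n ≤ Real.logb 2 (2 ^ (complexity 2 n)) := by
            exact Real.logb_le_logb_of_le one_lt_two (by exact_mod_cast hn) h1
        _ = complexity 2 n := by
            rw [Real.logb_pow, Real.logb_self_eq_one (by norm_num)]; ring
    exact_mod_cast Int.ceil_le.mpr (by exact_mod_cast this)
  · -- upper bound
    have hnat : (Nat.log 2 n : ℝ) ≤ Real.logb 2 n := Real.natLog_le_logb n 2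
    have h1 : (complexity 2 n : ℝ) ≤ 2 * (Nat.log 2 n : ℝ) - 1 := by
      have : complexity 2 n + 1 ≤ 2 * Nat.log 2 n := by omega
      have := (Nat.cast_le (α := ℝ)).mpr this
      push_cast at this
      linarith
    linarith
end
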